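/- Phase transition (contracting regime): for a bias-free ReLU network with all weight entries equal to r = 1/d^p with p > 1, input hyper-rectangle x₀ ± ε·𝟙, and any δ > 0, if the number of layers m satisfies m ≥ (1/(p−1))·log_d(ε/(2δ)), then for every output coordinate i, min over the input hyper-rectangle of T_L^{1:m}(x)ᵢ ≥ min over the input hyper-rectangle of f̃ᵢ^{1:m}(x) − δ. -/

import Mathlib

open Matrix

/-- Entrywise positive part of a matrix. -/
noncomputable def posM {d : ℕ} (M : Matrix (Fin d) (Fin d) ℝ) : Matrix (Fin d) (Fin d) ℝ :=
  Matrix.of fun i j => max (M i j) 0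

/-- Entrywise negative part of a matrix. -/
noncomputable def negM {d : ℕ} (M : Matrix (Fin d) (Fin d) ℝ) : Matrix (Fin d) (Fin d) ℝ :=
  Matrix.of fun i j => min (M i j) 0

/-- Componentwise ReLU. -/
noncomputable def reluV {d : ℕ} (v : Fin d → ℝ) : Fin d → ℝ := fun i => max (v i) 0

/-- Exact lower bound of `W x` over the hyper-rectangle `[a, b]`. -/
noncomputable def preLo {d : ℕ} (W : Matrix (Fin d) (Fin d) ℝ) (a b : Fin d → ℝ) :
    Fin d → ℝ :=
  W.mulVec b + (posM W).mulVec (a - b)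

/-- Exact upper bound of `W x` over the hyper-rectangle `[a, b]`. -/
noncomputable def preHi {d : ℕ} (W : Matrix (Fin d) (Fin d) ℝ) (a b : Fin d → ℝ) :
    Fin d → ℝ :=
  W.mulVec b + (posM (-W)).mulVec (b - a)

/-- IBP pre-activation bound pair at layer `s` of the bias-free network with
weights `V`, from the input hyper-rectangle `[a, b]`. -/
noncomputable def ibpPre {d : ℕ} (V : ℕ → Matrix (Fin d) (Fin d) ℝ) (a b : Fin d → ℝ) :
    ℕ → (Fin d → ℝ) × (Fin d → ℝ)
  | 0 => (preLo (V 0) a b, preHi (V 0) a b)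
  | s + 1 =>
      (preLo (V (s + 1)) (reluV (ibpPre V a b s).1) (reluV (ibpPre V a b s).2),
       preHi (V (s + 1)) (reluV (ibpPre V a b s).1) (reluV (ibpPre V a b s).2))

/-- ReLU parallelogram relaxation slope from scalar pre-activation bounds. -/
noncomputable def Dslope (x y : ℝ) : ℝ :=
  if 0 ≤ x then 1 else if y ≤ 0 then 0 else y / (y - x)

/-- ReLU parallelogram relaxation upper offset from scalar pre-activation bounds. -/
noncomputable def offUp (x y : ℝ) : ℝ :=
  if 0 ≤ x then 0 else if y ≤ 0 then 0 else -(x * y) / (y - x)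

/-- The diagonal slope matrix of the ReLU relaxation at layer `s`. -/
noncomputable def Dmat {d : ℕ} (V : ℕ → Matrix (Fin d) (Fin d) ℝ) (a b : Fin d → ℝ)
    (s : ℕ) : Matrix (Fin d) (Fin d) ℝ :=
  Matrix.diagonal fun i => Dslope ((ibpPre V a b s).1 i) ((ibpPre V a b s).2 i)

/-- The upper offset vector of the ReLU relaxation at layer `s` (lower offset is `0`). -/
noncomputable def offU {d : ℕ} (V : ℕ → Matrix (Fin d) (Fin d) ℝ) (a b : Fin d → ℝ)
    (s : ℕ) : Fin d → ℝ :=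
  fun i => offUp ((ibpPre V a b s).1 i) ((ibpPre V a b s).2 i)

/-- Accumulated slope matrix `W_L^{(kend−t):kend}` of the multi-layer linear lower
approximation of the sub-network ending (linearly) at layer `kend`. -/
noncomputable def Wacc {d : ℕ} (V : ℕ → Matrix (Fin d) (Fin d) ℝ) (a b : Fin d → ℝ)
    (kend : ℕ) : ℕ → Matrix (Fin d) (Fin d) ℝ
  | 0 => V kend
  | t + 1 => (Wacc V a b kend t * Dmat V a b (kend - (t + 1))) * V (kend - (t + 1))

/-- Accumulated bias `b_L^{(kend−t):kend}` of the multi-layer linear lower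
approximation (the network biases and the ReLU lower offsets are `0`). -/
noncomputable def bacc {d : ℕ} (V : ℕ → Matrix (Fin d) (Fin d) ℝ) (a b : Fin d → ℝ)
    (kend : ℕ) : ℕ → Fin d → ℝ
  | 0 => 0
  | t + 1 => (Wacc V a b kend t * Dmat V a b (kend - (t + 1))).mulVec 0
      + (negM (Wacc V a b kend t)).mulVec (offU V a b (kend - (t + 1)))
      + (posM (Wacc V a b kend t)).mulVec 0
      + bacc V a b kend t

/-- Forward ReLU network: composition of layers `0..s` with ReLU activations. -/
noncomputable def fwd {d : ℕ} (V : ℕ → Matrix (Fin d) (Fin d) ℝ) :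
    ℕ → (Fin d → ℝ) → (Fin d → ℝ)
  | 0 => fun x => reluV ((V 0).mulVec x)
  | s + 1 => fun x => reluV ((V (s + 1)).mulVec (fwd V s x))

/-- Sub-network of layers `0..k` with the last ReLU dropped. -/
noncomputable def ftil {d : ℕ} (V : ℕ → Matrix (Fin d) (Fin d) ℝ) (k : ℕ)
    (x : Fin d → ℝ) : Fin d → ℝ :=
  (V k).mulVec (fwd V (k - 1) x)

/-- Constant weight matrices `Wˡ = d^{−p}·J`. -/
noncomputable def Vconst (d : ℕ) (p : ℝ) : ℕ → Matrix (Fin d) (Fin d) ℝ :=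
  fun _ => ((d : ℝ) ^ (-p)) • Matrix.of fun _ _ => (1 : ℝ)

/-! ### Auxiliary development -/

/-- Scalar recursion for IBP bounds with constant matrices. -/
noncomputable def LBv (c a0 : ℝ) : ℕ → ℝ
  | 0 => a0
  | s + 1 => c * max (LBv c a0 s) 0

/-- Scalar recursion for accumulated slope coefficients. -/
noncomputable def Cc (c : ℝ) (ds : ℕ → ℝ) (kend : ℕ) : ℕ → ℝ
  | 0 => 1
  | t + 1 => Cc c ds kend t * ds (kend - (t + 1)) * c

lemma rconst_nonneg (d : ℕ) (p : ℝ) : (0:ℝ) ≤ (d:ℝ) ^ (-p) :=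
  Real.rpow_nonneg (Nat.cast_nonneg d) _

lemma vconst_apply (d : ℕ) (p : ℝ) (k : ℕ) (i j : Fin d) :
    Vconst d p k i j = (d:ℝ) ^ (-p) := by
  simp [Vconst]

lemma vconst_mulVec (d : ℕ) (p : ℝ) (k : ℕ) (x : Fin d → ℝ) :
    (Vconst d p k).mulVec x = fun _ => (d:ℝ) ^ (-p) * ∑ j, x j := by
  funext i
  simp [Matrix.mulVec, dotProduct, vconst_apply, Finset.mul_sum]

lemma posM_vconst (d : ℕ) (p : ℝ) (k : ℕ) : posM (Vconst d p k) = Vconst d p k := by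
  ext i j
  simpa [posM, vconst_apply] using max_eq_left (rconst_nonneg d p)

lemma posM_neg_vconst (d : ℕ) (p : ℝ) (k : ℕ) : posM (-(Vconst d p k)) = 0 := by
  ext i j
  simpa [posM, vconst_apply] using max_eq_right (neg_nonpos.mpr (rconst_nonneg d p))

lemma preLo_vconst (d : ℕ) (p : ℝ) (k : ℕ) (a b : Fin d → ℝ) :
    preLo (Vconst d p k) a b = fun _ => (d:ℝ) ^ (-p) * ∑ j, a j := by
  funext i
  simp only [preLo, Pi.add_apply, posM_vconst, vconst_mulVec, Pi.sub_apply,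
    Finset.sum_sub_distrib]
  ring

lemma preHi_vconst (d : ℕ) (p : ℝ) (k : ℕ) (a b : Fin d → ℝ) :
    preHi (Vconst d p k) a b = fun _ => (d:ℝ) ^ (-p) * ∑ j, b j := by
  funext i
  simp only [preHi, Pi.add_apply, posM_neg_vconst, Matrix.zero_mulVec, Pi.zero_apply,
    add_zero, vconst_mulVec]

lemma ibp_eq (d : ℕ) (p : ℝ) (a b : Fin d → ℝ) (s : ℕ) :
    ibpPre (Vconst d p) a b s =
      (fun _ => LBv ((d:ℝ)^(-p) * d) ((d:ℝ)^(-p) * ∑ j, a j) s,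
       fun _ => LBv ((d:ℝ)^(-p) * d) ((d:ℝ)^(-p) * ∑ j, b j) s) := by
  induction s with
  | zero =>
      simp only [ibpPre, preLo_vconst, preHi_vconst]
      rfl
  | succ s ih =>
      rw [ibpPre, ih]
      simp only [reluV, preLo_vconst, preHi_vconst]
      refine Prod.ext ?_ ?_ <;> funext i <;>
        simp [LBv, Finset.sum_const, Finset.card_univ, mul_assoc]

lemma dmat_eq (d : ℕ) (p : ℝ) (a b : Fin d → ℝ) (s : ℕ) :
    Dmat (Vconst d p) a b s =
      Dslope (LBv ((d:ℝ)^(-p) * d) ((d:ℝ)^(-p) * ∑ j, a j) s)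
             (LBv ((d:ℝ)^(-p) * d) ((d:ℝ)^(-p) * ∑ j, b j) s)
        • (1 : Matrix (Fin d) (Fin d) ℝ) := by
  rw [Dmat, ibp_eq]
  ext i j
  by_cases h : i = j <;>
    simp [Matrix.diagonal_apply, Matrix.one_apply, h]

lemma vconst_mul_vconst (d : ℕ) (p : ℝ) (k k' : ℕ) :
    Vconst d p k * Vconst d p k' = ((d:ℝ)^(-p) * d) • Vconst d p 0 := by
  ext i j
  simp [Matrix.mul_apply, vconst_apply, Finset.sum_const, Finset.card_univ, nsmul_eq_mul]
  ring

lemma wacc_eq (d : ℕ) (p : ℝ) (a b : Fin d → ℝ) (kend : ℕ) (t : ℕ) :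
    Wacc (Vconst d p) a b kend t =
      Cc ((d:ℝ)^(-p) * d)
        (fun s => Dslope (LBv ((d:ℝ)^(-p) * d) ((d:ℝ)^(-p) * ∑ j, a j) s)
                         (LBv ((d:ℝ)^(-p) * d) ((d:ℝ)^(-p) * ∑ j, b j) s)) kend t
        • Vconst d p 0 := by
  induction t with
  | zero =>
      show Vconst d p kend = _
      rw [show Cc ((d:ℝ)^(-p) * d) _ kend 0 = 1 from rfl, one_smul]
      rfl
  | succ t ih =>
      rw [Wacc, ih, dmat_eq,
        show Vconst d p (kend - (t+1)) = Vconst d p 0 from rfl,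
        smul_mul_assoc, mul_smul_comm, mul_one, smul_smul, smul_mul_assoc,
        vconst_mul_vconst, smul_smul]
      rfl

lemma dslope_nonneg (x y : ℝ) : 0 ≤ Dslope x y := by
  unfold Dslope
  split_ifs with h1 h2
  · norm_num
  · norm_num
  · have hy : 0 < y := lt_of_not_ge h2
    have hx : x < 0 := lt_of_not_ge h1
    exact div_nonneg hy.le (by linarith)

lemma dslope_of_nonneg {x : ℝ} (y : ℝ) (h : 0 ≤ x) : Dslope x y = 1 := if_pos h

lemma dslope_of_neg_nonpos {x y : ℝ} (hx : x < 0) (hy : y ≤ 0) : Dslope x y = 0 := by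
  rw [Dslope, if_neg (not_le.mpr hx), if_pos hy]

lemma dslope_of_neg_pos {x y : ℝ} (hx : x < 0) (hy : 0 < y) :
    Dslope x y = y / (y - x) := by
  rw [Dslope, if_neg (not_le.mpr hx), if_neg (not_le.mpr hy)]

lemma cc_nonneg (c : ℝ) (ds : ℕ → ℝ) (kend : ℕ) (hc : 0 ≤ c)
    (h : ∀ s, 0 ≤ ds s) : ∀ t, 0 ≤ Cc c ds kend t
  | 0 => zero_le_one
  | t + 1 => by
      rw [Cc]
      exact mul_nonneg (mul_nonneg (cc_nonneg c ds kend hc h t) (h _)) hc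

lemma cc_all_one (c : ℝ) (ds : ℕ → ℝ) (kend : ℕ) (h : ∀ s, ds s = 1) :
    ∀ t, Cc c ds kend t = c ^ t
  | 0 => by simp [Cc]
  | t + 1 => by
      rw [Cc, cc_all_one c ds kend h t, h, pow_succ, mul_one]

lemma cc_tail_one (c : ℝ) (ds : ℕ → ℝ) (kend : ℕ) (h : ∀ s, 1 ≤ s → ds s = 1) :
    ∀ t, t + 1 ≤ kend → Cc c ds kend t = c ^ t
  | 0, _ => by simp [Cc]
  | t + 1, ht => by
      rw [Cc, cc_tail_one c ds kend h t (by omega), h _ (by omega), pow_succ, mul_one]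

lemma cc_last (c : ℝ) (ds : ℕ → ℝ) (h : ∀ s, 1 ≤ s → ds s = 1) :
    ∀ kend, 1 ≤ kend → Cc c ds kend kend = c ^ (kend - 1) * ds 0 * c := by
  intro kend hk
  match kend, hk with
  | k + 1, _ =>
      rw [Cc, cc_tail_one c ds (k+1) h k le_rfl, show k + 1 - (k+1) = 0 by omega]
      simp

lemma lbv_nonneg (c a0 : ℝ) (hc : 0 ≤ c) (h : 0 ≤ a0) : ∀ s, 0 ≤ LBv c a0 s
  | 0 => h
  | s + 1 => by
      rw [LBv]
      exact mul_nonneg hc (le_max_right _ _)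

lemma lbv_succ_nonpos (c a0 : ℝ) (h : a0 ≤ 0) : ∀ s, LBv c a0 (s + 1) = 0
  | 0 => by rw [LBv, LBv, max_eq_right h, mul_zero]
  | s + 1 => by
      rw [LBv, lbv_succ_nonpos c a0 h s]
      simp

lemma negM_smul_vconst (d : ℕ) (p : ℝ) (c : ℝ) (hc : 0 ≤ c) :
    negM (c • Vconst d p 0) = 0 := by
  ext i j
  have : (c • Vconst d p 0) i j = c * ((d:ℝ) ^ (-p)) := by
    simp [vconst_apply, Matrix.smul_apply]
  simp only [negM, Matrix.of_apply, this, Matrix.zero_apply]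
  exact min_eq_right (mul_nonneg hc (rconst_nonneg d p))

lemma bacc_zero (d : ℕ) (p : ℝ) (a b : Fin d → ℝ) (kend : ℕ) :
    ∀ t, bacc (Vconst d p) a b kend t = 0
  | 0 => rfl
  | t + 1 => by
      rw [bacc, bacc_zero d p a b kend t, wacc_eq,
        negM_smul_vconst d p _ (cc_nonneg _ _ _
          (mul_nonneg (rconst_nonneg d p) (Nat.cast_nonneg d))
          (fun s => dslope_nonneg _ _) t)]
      simp [Matrix.mulVec_zero, Matrix.zero_mulVec]

lemma fwd_eq (d : ℕ) (p : ℝ) (x : Fin d → ℝ) :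
    ∀ s, fwd (Vconst d p) s x =
      fun _ => ((d:ℝ)^(-p) * d) ^ s * max ((d:ℝ)^(-p) * ∑ j, x j) 0
  | 0 => by
      funext i
      simp only [fwd, reluV, vconst_mulVec, pow_zero, one_mul]
  | s + 1 => by
      funext i
      show reluV ((Vconst d p (s+1)).mulVec (fwd (Vconst d p) s x)) i = _
      rw [fwd_eq d p x s, vconst_mulVec]
      simp only [reluV, Finset.sum_const, Finset.card_univ, Fintype.card_fin,
        nsmul_eq_mul]
      have hM : (0:ℝ) ≤ max ((d:ℝ)^(-p) * ∑ j, x j) 0 := le_max_right _ _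
      rw [max_eq_left (by
        have h1 : (0:ℝ) ≤ ((d:ℝ)^(-p) * d) ^ s :=
          pow_nonneg (mul_nonneg (rconst_nonneg d p) (Nat.cast_nonneg d)) s
        have h2 : (0:ℝ) ≤ (d:ℝ) := Nat.cast_nonneg d
        have h3 := rconst_nonneg d p
        positivity)]
      rw [pow_succ]
      ring

lemma ftil_eq (d : ℕ) (p : ℝ) (k : ℕ) (hk : 1 ≤ k) (x : Fin d → ℝ) :
    ftil (Vconst d p) k x =
      fun _ => ((d:ℝ)^(-p) * d) ^ k * max ((d:ℝ)^(-p) * ∑ j, x j) 0 := by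
  obtain ⟨k', rfl⟩ : ∃ k', k = k' + 1 := ⟨k - 1, by omega⟩
  funext i
  simp only [ftil, show k' + 1 - 1 = k' from rfl, fwd_eq, vconst_mulVec]
  simp only [Finset.sum_const, Finset.card_univ, Fintype.card_fin, nsmul_eq_mul]
  rw [pow_succ]
  ring

lemma key_bound (d m : ℕ) (p ε δ : ℝ) (hd : 2 ≤ d) (hp : 1 < p) (hε : 0 < ε)
    (hδ : 0 < δ)
    (hm : (m : ℝ) ≥ (1 / (p - 1)) * (Real.log (ε / (2 * δ)) / Real.log d)) :
    ((d:ℝ)^(-p) * d) ^ m * ε / 2 ≤ δ := by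
  have hd1 : (1:ℝ) < d := by exact_mod_cast (by omega : 1 < d)
  have hd0 : (0:ℝ) < d := by linarith
  have hlogd : 0 < Real.log d := Real.log_pos hd1
  have hp1 : 0 < p - 1 := by linarith
  have h1 : Real.log (ε / (2 * δ)) ≤ (p - 1) * m * Real.log d := by
    calc Real.log (ε / (2 * δ))
        = ((p - 1) * Real.log d) *
            ((1 / (p - 1)) * (Real.log (ε / (2 * δ)) / Real.log d)) := by
          field_simp
        _ ≤ ((p - 1) * Real.log d) * m :=
          mul_le_mul_of_nonneg_left hm (by positivity)
        _ = (p - 1) * m * Real.log d := by ring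
  have hrdv : (d:ℝ)^(-p) * d = (d:ℝ) ^ ((1:ℝ) - p) := by
    rw [show (1:ℝ) - p = -p + 1 by ring, Real.rpow_add hd0, Real.rpow_one]
  have hpow : ((d:ℝ)^(-p) * d) ^ m =
      Real.exp (Real.log d * (((1:ℝ) - p) * (m:ℝ))) := by
    rw [hrdv, ← Real.rpow_natCast ((d:ℝ) ^ ((1:ℝ) - p)) m, ← Real.rpow_mul hd0.le,
      Real.rpow_def_of_pos hd0]
  have hlog2 : Real.log (2 * δ / ε) = - Real.log (ε / (2 * δ)) := by
    rw [← Real.log_inv]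
    congr 1
    field_simp
  have hle : Real.log d * (((1:ℝ) - p) * (m:ℝ)) ≤ Real.log (2 * δ / ε) := by
    have hr : Real.log d * (((1:ℝ) - p) * (m:ℝ)) = -((p - 1) * m * Real.log d) := by
      ring
    rw [hr, hlog2]
    linarith
  have h2 : ((d:ℝ)^(-p) * d) ^ m ≤ 2 * δ / ε := by
    rw [hpow]
    calc Real.exp (Real.log d * (((1:ℝ) - p) * (m:ℝ)))
        ≤ Real.exp (Real.log (2 * δ / ε)) := Real.exp_le_exp.mpr hle
      _ = 2 * δ / ε := Real.exp_log (by positivity)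
  have h3 := mul_le_mul_of_nonneg_right h2 hε.le
  rw [div_mul_cancel₀ _ (ne_of_gt hε)] at h3
  linarith

/-- Phase transition, contracting regime: for the bias-free ReLU
network with all weight entries `r = d^{−p}`, `p > 1`, input hyper-rectangle
`x₀ ± ε𝟙`, and `m ≥ (1/(p−1))·log_d(ε/(2δ))` layers, the multi-layer
parallelogram lower approximation `T_L^{1:m}` is `δ`-tight in every coordinate. -/
theorem stmt16 (d m : ℕ) (hd : 2 ≤ d) (hm2 : 2 ≤ m) (p ε δ : ℝ)
    (hp : 1 < p) (hε : 0 < ε) (hδ : 0 < δ) (x₀ : Fin d → ℝ)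
    (hm : (m : ℝ) ≥ (1 / (p - 1)) * (Real.log (ε / (2 * δ)) / Real.log d)) :
    ∀ i, sInf {y : ℝ | ∃ x : Fin d → ℝ,
          (∀ j, x₀ j - ε ≤ x j ∧ x j ≤ x₀ j + ε) ∧
          y = ((Wacc (Vconst d p) (fun j => x₀ j - ε) (fun j => x₀ j + ε) (m - 1) (m - 1)).mulVec x
              + bacc (Vconst d p) (fun j => x₀ j - ε) (fun j => x₀ j + ε) (m - 1) (m - 1)) i}
      ≥ sInf {y : ℝ | ∃ x : Fin d → ℝ,
          (∀ j, x₀ j - ε ≤ x j ∧ x j ≤ x₀ j + ε) ∧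
          y = ftil (Vconst d p) (m - 1) x i} - δ := by
  intro i
  have hd0 : (0:ℝ) < d := by
    have : 0 < d := by omega
    exact_mod_cast this
  have hr : (0:ℝ) < (d:ℝ) ^ (-p) := Real.rpow_pos_of_pos hd0 _
  have hrd : (0:ℝ) < (d:ℝ) ^ (-p) * d := mul_pos hr hd0
  have hk1 : 1 ≤ m - 1 := by omega
  set A : Fin d → ℝ := fun j => x₀ j - ε with hA
  set B : Fin d → ℝ := fun j => x₀ j + ε with hB
  have hboxA : ∀ j, x₀ j - ε ≤ A j ∧ A j ≤ x₀ j + ε := by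
    intro j
    constructor
    · simp [hA]
    · simp [hA]; linarith
  have hx₀box : ∀ j, x₀ j - ε ≤ x₀ j ∧ x₀ j ≤ x₀ j + ε := by
    intro j; constructor <;> linarith
  have hsumAB : ∑ j, B j - ∑ j, A j = 2 * d * ε := by
    simp only [hA, hB, Finset.sum_add_distrib, Finset.sum_sub_distrib,
      Finset.sum_const, Finset.card_univ, Fintype.card_fin, nsmul_eq_mul]
    ring
  set ds : ℕ → ℝ := fun s =>
    Dslope (LBv ((d:ℝ)^(-p) * d) ((d:ℝ)^(-p) * ∑ j, A j) s)
           (LBv ((d:ℝ)^(-p) * d) ((d:ℝ)^(-p) * ∑ j, B j) s) with hds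
  set Cval : ℝ := Cc ((d:ℝ)^(-p) * d) ds (m - 1) (m - 1) with hC
  have hCnn : 0 ≤ Cval := by
    rw [hC]
    exact cc_nonneg _ _ _ hrd.le (fun s => dslope_nonneg _ _) _
  have hTval : ∀ x : Fin d → ℝ,
      ((Wacc (Vconst d p) A B (m - 1) (m - 1)).mulVec x
        + bacc (Vconst d p) A B (m - 1) (m - 1)) i
        = Cval * ((d:ℝ)^(-p) * ∑ j, x j) := by
    intro x
    rw [wacc_eq, bacc_zero, Pi.add_apply, Pi.zero_apply, add_zero,
      Matrix.smul_mulVec, vconst_mulVec]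
    simp only [Pi.smul_apply, smul_eq_mul]
    rfl
  have hfval : ∀ x : Fin d → ℝ,
      ftil (Vconst d p) (m - 1) x i
        = ((d:ℝ)^(-p) * d) ^ (m - 1) * max ((d:ℝ)^(-p) * ∑ j, x j) 0 := by
    intro x
    rw [ftil_eq d p (m - 1) hk1 x]
  have h1 : Cval * ((d:ℝ)^(-p) * ∑ j, A j) ≤
      sInf {y : ℝ | ∃ x : Fin d → ℝ,
        (∀ j, x₀ j - ε ≤ x j ∧ x j ≤ x₀ j + ε) ∧
        y = ((Wacc (Vconst d p) A B (m - 1) (m - 1)).mulVec x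
            + bacc (Vconst d p) A B (m - 1) (m - 1)) i} := by
    apply le_csInf
    · exact ⟨_, x₀, hx₀box, rfl⟩
    · rintro y ⟨x, hx, rfl⟩
      rw [hTval]
      have hsA : ∑ j, A j ≤ ∑ j, x j :=
        Finset.sum_le_sum fun j _ => by simpa [hA] using (hx j).1
      exact mul_le_mul_of_nonneg_left
        (mul_le_mul_of_nonneg_left hsA hr.le) hCnn
  have h2 : sInf {y : ℝ | ∃ x : Fin d → ℝ,
        (∀ j, x₀ j - ε ≤ x j ∧ x j ≤ x₀ j + ε) ∧
        y = ftil (Vconst d p) (m - 1) x i} ≤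
      ((d:ℝ)^(-p) * d) ^ (m - 1) * max ((d:ℝ)^(-p) * ∑ j, A j) 0 := by
    apply csInf_le
    · refine ⟨0, ?_⟩
      rintro y ⟨x, hx, rfl⟩
      rw [hfval]
      positivity
    · exact ⟨A, hboxA, (hfval A).symm⟩
  have hmain : Cval * ((d:ℝ)^(-p) * ∑ j, A j) ≥
      ((d:ℝ)^(-p) * d) ^ (m - 1) * max ((d:ℝ)^(-p) * ∑ j, A j) 0 - δ := by
    rcases le_or_gt 0 ((d:ℝ)^(-p) * ∑ j, A j) with hℓ | hℓ
    · -- non-contracted case: all slopes are 1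
      have hone : ∀ s, ds s = 1 := by
        intro s
        rw [hds]
        exact dslope_of_nonneg _ (lbv_nonneg _ _ hrd.le hℓ s)
      have : Cval = ((d:ℝ)^(-p) * d) ^ (m - 1) := by
        rw [hC]; exact cc_all_one _ _ _ hone _
      rw [this, max_eq_left hℓ]
      linarith
    · -- crossing case
      have htail : ∀ s, 1 ≤ s → ds s = 1 := by
        intro s hs
        obtain ⟨s', rfl⟩ : ∃ s', s = s' + 1 := ⟨s - 1, by omega⟩
        rw [hds]
        simp only [lbv_succ_nonpos _ _ hℓ.le s']
        exact dslope_of_nonneg _ le_rfl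
      have hCv : Cval = ((d:ℝ)^(-p) * d) ^ (m - 1 - 1) * ds 0 * ((d:ℝ)^(-p) * d) := by
        rw [hC]; exact cc_last _ _ htail _ hk1
      rw [max_eq_right hℓ.le, mul_zero, zero_sub]
      rcases le_or_gt ((d:ℝ)^(-p) * ∑ j, B j) 0 with hu | hu
      · -- dead ReLU: slope 0
        have : ds 0 = 0 := by
          rw [hds]
          exact dslope_of_neg_nonpos hℓ hu
        rw [hCv, this, mul_zero, zero_mul, zero_mul]
        linarith
      · -- genuinely crossing
        have hds0 : ds 0 = ((d:ℝ)^(-p) * ∑ j, B j) /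
            (((d:ℝ)^(-p) * ∑ j, B j) - ((d:ℝ)^(-p) * ∑ j, A j)) := by
          rw [hds]
          exact dslope_of_neg_pos hℓ hu
        set ℓ : ℝ := (d:ℝ)^(-p) * ∑ j, A j with hℓdef
        set u : ℝ := (d:ℝ)^(-p) * ∑ j, B j with hudef
        have hul : u - ℓ = (d:ℝ)^(-p) * (2 * d * ε) := by
          rw [hudef, hℓdef, ← mul_sub, hsumAB]
        have hulpos : 0 < u - ℓ := by
          rw [hul]; positivity
        have hq : (u / (u - ℓ)) * (-ℓ) ≤ (u - ℓ) / 4 := by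
          rw [div_mul_eq_mul_div, div_le_div_iff₀ hulpos (by norm_num)]
          nlinarith [sq_nonneg (u + ℓ)]
        have hkey : ((d:ℝ)^(-p) * d) ^ m * ε / 2 ≤ δ :=
          key_bound d m p ε δ hd hp hε hδ hm
        have hpw1 : ((d:ℝ)^(-p) * d) ^ (m - 1 - 1) * ((d:ℝ)^(-p) * d)
            = ((d:ℝ)^(-p) * d) ^ (m - 1) := by
          rw [← pow_succ]
          congr 1
          omega
        have hpw2 : ((d:ℝ)^(-p) * d) ^ (m - 1) * ((d:ℝ)^(-p) * d)
            = ((d:ℝ)^(-p) * d) ^ m := by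
          rw [← pow_succ]
          congr 1
          omega
        have hpos1 : (0:ℝ) < ((d:ℝ)^(-p) * d) ^ (m - 1) := pow_pos hrd _
        -- bound Cval * (-ℓ) ≤ δ
        have hbound : Cval * (-ℓ) ≤ δ := by
          have e1 : Cval * (-ℓ)
              = ((d:ℝ)^(-p) * d) ^ (m - 1) * ((u / (u - ℓ)) * (-ℓ)) := by
            rw [hCv, hds0, ← hpw1]
            ring
          have e2 : ((d:ℝ)^(-p) * d) ^ (m - 1) * ((u / (u - ℓ)) * (-ℓ))
              ≤ ((d:ℝ)^(-p) * d) ^ (m - 1) * ((u - ℓ) / 4) :=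
            mul_le_mul_of_nonneg_left hq hpos1.le
          have e3 : ((d:ℝ)^(-p) * d) ^ (m - 1) * ((u - ℓ) / 4)
              = ((d:ℝ)^(-p) * d) ^ m * ε / 2 := by
            rw [hul, ← hpw2]
            ring
          linarith
        nlinarith [hbound]
  linarith [h1, h2, hmain]
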